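/- Let (Ω, 𝒜, μ) be a σ-finite measure space, u ∈ L^1(Ω), and K ∈ (0, μ(Ω)). Then the following are equivalent: (i) ‖u‖_0 ≤ K; (ii) ‖u‖_1 = |u|_K; (iii) |u|_H = |u|_K for all H ∈ (K, μ(Ω)]. Moreover each of these implies |u|_h = |u|_K for some h ∈ (K, μ(Ω)]. -/

import Mathlib

open MeasureTheory Set
open scoped ENNReal

/-- The largest-K-norm: `|u|_K = sup { ∫_A |u| dμ : A measurable, μ(A) ≤ K }`. -/
noncomputable def largestK {Ω : Type*} [MeasurableSpace Ω] (μ : Measure Ω) (K : ℝ≥0∞)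
    (u : Ω → ℝ) : ℝ :=
  sSup {r : ℝ | ∃ A : Set Ω, MeasurableSet A ∧ μ A ≤ K ∧ r = ∫ x in A, |u x| ∂μ}

section aux

variable {Ω : Type*} [MeasurableSpace Ω] {μ : Measure Ω} {u : Ω → ℝ} {K H : ℝ≥0∞}

lemma largestK_zero_mem :
    (0 : ℝ) ∈ {r : ℝ | ∃ A : Set Ω, MeasurableSet A ∧ μ A ≤ K ∧ r = ∫ x in A, |u x| ∂μ} :=
  ⟨∅, MeasurableSet.empty, by simp, by simp⟩

lemma largestK_le_of_mem (hu : Integrable u μ) :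
    ∀ r ∈ {r : ℝ | ∃ A : Set Ω, MeasurableSet A ∧ μ A ≤ K ∧ r = ∫ x in A, |u x| ∂μ},
      r ≤ ∫ x, |u x| ∂μ := by
  rintro r ⟨A, hA, -, rfl⟩
  exact setIntegral_le_integral hu.abs (Filter.Eventually.of_forall fun x => abs_nonneg _)

lemma largestK_bddAbove (hu : Integrable u μ) :
    BddAbove {r : ℝ | ∃ A : Set Ω, MeasurableSet A ∧ μ A ≤ K ∧ r = ∫ x in A, |u x| ∂μ} :=
  ⟨∫ x, |u x| ∂μ, largestK_le_of_mem hu⟩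

lemma largestK_le_integral (hu : Integrable u μ) :
    largestK μ K u ≤ ∫ x, |u x| ∂μ :=
  csSup_le ⟨0, largestK_zero_mem⟩ (largestK_le_of_mem hu)

lemma largestK_mono (hu : Integrable u μ) (hKH : K ≤ H) :
    largestK μ K u ≤ largestK μ H u := by
  refine csSup_le_csSup (largestK_bddAbove hu) ⟨0, largestK_zero_mem⟩ ?_
  rintro r ⟨A, hA, hAK, rfl⟩
  exact ⟨A, hA, hAK.trans hKH, rfl⟩

lemma le_largestK (hu : Integrable u μ) {A : Set Ω} (hA : MeasurableSet A) (hAK : μ A ≤ K) :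
    (∫ x in A, |u x| ∂μ) ≤ largestK μ K u :=
  le_csSup (largestK_bddAbove hu) ⟨A, hA, hAK, rfl⟩

lemma largestK_congr {f : Ω → ℝ} (huf : u =ᵐ[μ] f) : largestK μ K u = largestK μ K f := by
  unfold largestK
  congr 1
  ext r
  constructor <;> rintro ⟨A, hA, hAK, rfl⟩ <;> refine ⟨A, hA, hAK, ?_⟩ <;>
    exact integral_congr_ae (ae_restrict_of_ae (by filter_upwards [huf] with x hx; rw [hx]))

end aux

/-- for a general σ-finite measure space (no atom-freeness assumed), TFAE:
(i) `‖u‖₀ = μ(supp u) ≤ K`; (ii) `‖u‖₁ = |u|_K`; (iii) `|u|_H = |u|_K` for all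
`H ∈ (K, μ(Ω)]`; moreover each of these implies `|u|_h = |u|_K` for some `h ∈ (K, μ(Ω)]`. -/
theorem stmt15 {Ω : Type*} [MeasurableSpace Ω] (μ : Measure Ω) [SigmaFinite μ]
    (u : Ω → ℝ) (hu : Integrable u μ)
    (K : ℝ≥0∞) (hK0 : 0 < K) (hK : K < μ Set.univ) :
    List.TFAE
      [μ (Function.support u) ≤ K,
       (∫ x, |u x| ∂μ) = largestK μ K u,
       ∀ H : ℝ≥0∞, K < H → H ≤ μ Set.univ → largestK μ H u = largestK μ K u] ∧
    (μ (Function.support u) ≤ K →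
      ∃ h : ℝ≥0∞, K < h ∧ h ≤ μ Set.univ ∧ largestK μ h u = largestK μ K u) := by
  have hKtop : K ≠ ∞ := hK.ne_top
  have htfae : List.TFAE
      [μ (Function.support u) ≤ K,
       (∫ x, |u x| ∂μ) = largestK μ K u,
       ∀ H : ℝ≥0∞, K < H → H ≤ μ Set.univ → largestK μ H u = largestK μ K u] := by
    tfae_have 1 → 2 := by
      intro h1
      set B := toMeasurable μ (Function.support u) with hBdef
      have hB : MeasurableSet B := measurableSet_toMeasurable μ _
      have hμB : μ B ≤ K := by rw [measure_toMeasurable]; exact h1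
      have hint : (∫ x, |u x| ∂μ) = ∫ x in B, |u x| ∂μ := by
        refine (setIntegral_eq_integral_of_forall_compl_eq_zero fun x hx => ?_).symm
        have : x ∉ Function.support u := fun h => hx (subset_toMeasurable μ _ h)
        simp [Function.notMem_support.mp this]
      exact le_antisymm (hint ▸ le_largestK hu hB hμB) (largestK_le_integral hu)
    tfae_have 2 → 3 := by
      intro h2 H hKH hH
      refine le_antisymm (h2 ▸ largestK_le_integral hu) (largestK_mono hu hKH.le)
    tfae_have 3 → 1 := by
      intro h3
      by_contra hsupp
      push_neg at hsupp
      -- measurable representative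
      obtain ⟨f, hfm, huf⟩ : ∃ f, StronglyMeasurable f ∧ u =ᵐ[μ] f :=
        ⟨hu.1.mk u, hu.1.stronglyMeasurable_mk, hu.1.ae_eq_mk⟩
      have hf_int : Integrable f μ := hu.congr huf
      have hsupp_eq : μ (Function.support f) = μ (Function.support u) := by
        refine measure_congr ?_
        filter_upwards [huf] with x hx
        exact congrArg (fun y : ℝ => y ≠ 0) hx.symm
      have hsuppf : K < μ (Function.support f) := hsupp_eq ▸ hsupp
      -- the sets E n
      set E : ℕ → Set Ω := fun n => {x | (1 : ℝ) / (n + 1) < |f x|} with hEdef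
      have hEmeas : ∀ n, MeasurableSet (E n) := fun n =>
        measurableSet_lt measurable_const hfm.measurable.abs
      have hEmono : Monotone E := by
        intro n m hnm x hx
        simp only [hEdef, Set.mem_setOf_eq] at hx ⊢
        refine lt_of_le_of_lt ?_ hx
        apply one_div_le_one_div_of_le
        · positivity
        · have : (n : ℝ) ≤ (m : ℝ) := Nat.cast_le.mpr hnm
          linarith
      have hEunion : Function.support f = ⋃ n, E n := by
        ext x
        simp only [Function.mem_support, Set.mem_iUnion, hEdef, Set.mem_setOf_eq]
        constructor
        · intro hx
          exact exists_nat_one_div_lt (abs_pos.mpr hx)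
        · rintro ⟨n, hn⟩
          intro h0
          rw [h0, abs_zero] at hn
          exact absurd hn (by positivity : (0:ℝ) < 1/(n+1)).asymm
      have hsup : K < ⨆ n, μ (E n) := by
        rw [← Directed.measure_iUnion (hEmono.directed_le), ← hEunion]
        exact hsuppf
      obtain ⟨n, hn⟩ := lt_iSup_iff.mp hsup
      set c : ℝ := 1 / (n + 1) with hcdef
      have hc : 0 < c := by positivity
      have hEfin : μ (E n) < ∞ := by
        refine lt_of_le_of_lt (measure_mono ?_) (hf_int.measure_norm_ge_lt_top hc)
        intro x hx
        simp only [hEdef, Set.mem_setOf_eq] at hx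
        exact le_of_lt hx
      -- key estimate
      have hεpos : 0 < c * ((μ (E n)).toReal - K.toReal) := by
        have : K.toReal < (μ (E n)).toReal :=
          ENNReal.toReal_lt_toReal hKtop hEfin.ne |>.mpr hn
        have := sub_pos.mpr this
        positivity
      set ε : ℝ := c * ((μ (E n)).toReal - K.toReal) with hεdef
      have hkey : ∀ A : Set Ω, MeasurableSet A → μ A ≤ K →
          (∫ x in A, |f x| ∂μ) + ε ≤ ∫ x in E n, |f x| ∂μ := by
        intro A hA hAK
        have hAfin : μ A < ∞ := lt_of_le_of_lt hAK hKtop.lt_top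
        have hiE : IntegrableOn (fun x => |f x|) (E n) μ := hf_int.abs.integrableOn
        have hiA : IntegrableOn (fun x => |f x|) A μ := hf_int.abs.integrableOn
        have hsplitE : (∫ x in E n ∩ A, |f x| ∂μ) + ∫ x in E n \ A, |f x| ∂μ
            = ∫ x in E n, |f x| ∂μ := integral_inter_add_diff hA hiE
        have hsplitA : (∫ x in A ∩ E n, |f x| ∂μ) + ∫ x in A \ E n, |f x| ∂μ
            = ∫ x in A, |f x| ∂μ := integral_inter_add_diff (hEmeas n) hiA
        have hAE : (∫ x in E n ∩ A, |f x| ∂μ) = ∫ x in A ∩ E n, |f x| ∂μ := by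
          rw [Set.inter_comm]
        -- lower bound on E n \ A
        have hlow : c * (μ (E n \ A)).toReal ≤ ∫ x in E n \ A, |f x| ∂μ := by
          have hfinEA : μ (E n \ A) < ∞ := lt_of_le_of_lt (measure_mono Set.diff_subset) hEfin
          calc c * (μ (E n \ A)).toReal = ∫ _ in E n \ A, c ∂μ := by
                rw [setIntegral_const, smul_eq_mul, mul_comm]; rfl
            _ ≤ ∫ x in E n \ A, |f x| ∂μ := by
                refine setIntegral_mono_on (integrableOn_const hfinEA.ne)
                  (hiE.mono_set Set.diff_subset) ((hEmeas n).diff hA) fun x hx => ?_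
                exact le_of_lt hx.1
        -- upper bound on A \ E n
        have hhigh : (∫ x in A \ E n, |f x| ∂μ) ≤ c * (μ (A \ E n)).toReal := by
          have hfinAE : μ (A \ E n) < ∞ := lt_of_le_of_lt (measure_mono Set.diff_subset) hAfin
          calc (∫ x in A \ E n, |f x| ∂μ) ≤ ∫ _ in A \ E n, c ∂μ := by
                refine setIntegral_mono_on (hiA.mono_set Set.diff_subset)
                  (integrableOn_const hfinAE.ne) (hA.diff (hEmeas n)) fun x hx => ?_
                exact le_of_not_gt hx.2
            _ = c * (μ (A \ E n)).toReal := by rw [setIntegral_const, smul_eq_mul, mul_comm]; rfl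
        -- measure arithmetic
        have hmE : (μ (E n ∩ A)).toReal + (μ (E n \ A)).toReal = (μ (E n)).toReal := by
          rw [← ENNReal.toReal_add (lt_of_le_of_lt (measure_mono Set.inter_subset_left) hEfin).ne
            (lt_of_le_of_lt (measure_mono Set.diff_subset) hEfin).ne,
            measure_inter_add_diff _ hA]
        have hmA : (μ (A ∩ E n)).toReal + (μ (A \ E n)).toReal = (μ A).toReal := by
          rw [← ENNReal.toReal_add (lt_of_le_of_lt (measure_mono Set.inter_subset_left) hAfin).ne
            (lt_of_le_of_lt (measure_mono Set.diff_subset) hAfin).ne,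
            measure_inter_add_diff _ (hEmeas n)]
        have hinter : (μ (E n ∩ A)).toReal = (μ (A ∩ E n)).toReal := by rw [Set.inter_comm]
        have hAK' : (μ A).toReal ≤ K.toReal := ENNReal.toReal_mono hKtop hAK
        nlinarith [hlow, hhigh, hsplitE, hsplitA, hAE, hmE, hmA, hinter, hAK', hc.le]
      -- contradiction
      have hcongrK : largestK μ K u = largestK μ K f := largestK_congr huf
      have hcongrE : largestK μ (μ (E n)) u = largestK μ (μ (E n)) f := largestK_congr huf
      have hKle : largestK μ K f ≤ (∫ x in E n, |f x| ∂μ) - ε := by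
        refine csSup_le ⟨0, largestK_zero_mem⟩ ?_
        rintro r ⟨A, hA, hAK, rfl⟩
        linarith [hkey A hA hAK]
      have hEle : (∫ x in E n, |f x| ∂μ) ≤ largestK μ (μ (E n)) f :=
        le_largestK hf_int (hEmeas n) le_rfl
      have heq : largestK μ (μ (E n)) u = largestK μ K u :=
        h3 (μ (E n)) hn (measure_mono (Set.subset_univ _))
      rw [hcongrK, hcongrE] at heq
      linarith
    tfae_finish
  refine ⟨htfae, fun h1 => ⟨μ Set.univ, hK, le_rfl, ?_⟩⟩
  have h02 : (μ (Function.support u) ≤ K) ↔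
      (∀ H : ℝ≥0∞, K < H → H ≤ μ Set.univ → largestK μ H u = largestK μ K u) := htfae.out 0 2
  exact h02.mp h1 (μ Set.univ) hK le_rfl
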